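/- Let 𝒜 be a homogeneous linear differential operator of order k with symbol 𝔸(ξ) and wave cone Λ_𝒜 ⊆ ℝ^n. Let π = span(Λ_𝒜) have dimension d ≥ 1 and fix an orthonormal basis e_1, …, e_d of π. Define the homogeneous operator 𝒜' of order k acting on ℝ^d-valued functions by the symbol 𝔸'(ξ)(u) = 𝔸(ξ)(Σ_{i=1}^d u_i e_i) for u = (u_1,…,u_d) ∈ ℝ^d. Then: (i) 𝒜' is balanced, i.e. span(Λ_{𝒜'}) = ℝ^d; and (ii) 𝒜 has constant rank if and only if 𝒜' has constant rank. -/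

import Mathlib

open MeasureTheory Metric Set Matrix Filter

/-- Multi-indices on `Fin m` of total degree `k`. -/
def mIdx (m k : ℕ) : Finset (Fin m → ℕ) :=
  (Fintype.piFinset fun _ => Finset.range (k + 1)).filter fun α => ∑ i, α i = k

/-- Partial derivative in the `i`-th coordinate direction. -/
noncomputable def pderiv' {m : ℕ} {E : Type*} [NormedAddCommGroup E] [NormedSpace ℝ E]
    (i : Fin m) (f : (Fin m → ℝ) → E) : (Fin m → ℝ) → E :=
  fun x => fderiv ℝ f x (Pi.single i 1)

/-- Iterated partial derivative `∂^α`. -/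
noncomputable def mderiv {m : ℕ} {E : Type*} [NormedAddCommGroup E] [NormedSpace ℝ E]
    (α : Fin m → ℕ) (f : (Fin m → ℝ) → E) : (Fin m → ℝ) → E :=
  (List.finRange m).foldr (fun i g => (pderiv' i)^[α i] g) f

/-- The symbol `𝔸(ξ) = Σ_{|α|=k} ξ^α A_α` of a homogeneous operator of order `k`. -/
noncomputable def opSymb {m n N : ℕ} (k : ℕ) (A : (Fin m → ℕ) → Matrix (Fin N) (Fin n) ℝ)
    (ξ : Fin m → ℝ) : Matrix (Fin N) (Fin n) ℝ :=
  ∑ α ∈ mIdx m k, (∏ i, ξ i ^ α i) • A α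

/-- The wave cone `Λ_𝒜 = ⋃_{ξ ≠ 0} ker 𝔸(ξ)`. -/
def waveCone {m n N : ℕ} (k : ℕ) (A : (Fin m → ℕ) → Matrix (Fin N) (Fin n) ℝ) :
    Set (Fin n → ℝ) :=
  {η | ∃ ξ : Fin m → ℝ, ξ ≠ 0 ∧ (opSymb k A ξ).mulVec η = 0}

/-- `𝒜` has constant rank. -/
def ConstRank {m n N : ℕ} (k : ℕ) (A : (Fin m → ℕ) → Matrix (Fin N) (Fin n) ℝ) : Prop :=
  ∃ r, ∀ ξ : Fin m → ℝ, ξ ≠ 0 → (opSymb k A ξ).rank = r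

/-- `𝒜` is balanced: the wave cone spans `ℝ^n`. -/
def IsBalanced {m n N : ℕ} (k : ℕ) (A : (Fin m → ℕ) → Matrix (Fin N) (Fin n) ℝ) : Prop :=
  Submodule.span ℝ (waveCone k A) = ⊤

/-- `𝓑` (order `k'`, coefficients `B`) is a potential for `𝒜` (order `k`, coefficients `A`). -/
def IsPotential {m n n' N : ℕ} (k k' : ℕ) (A : (Fin m → ℕ) → Matrix (Fin N) (Fin n) ℝ)
    (B : (Fin m → ℕ) → Matrix (Fin n) (Fin n') ℝ) : Prop :=
  ∀ ξ : Fin m → ℝ, ξ ≠ 0 →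
    LinearMap.ker (opSymb k A ξ).mulVecLin = LinearMap.range (opSymb k' B ξ).mulVecLin

/-- Pointwise action `𝓑(V)(x) = Σ_{|α|=k'} B_α ∂^α V (x)`. -/
noncomputable def opApply {m n n' : ℕ} (k' : ℕ) (B : (Fin m → ℕ) → Matrix (Fin n) (Fin n') ℝ)
    (V : (Fin m → ℝ) → (Fin n' → ℝ)) : (Fin m → ℝ) → (Fin n → ℝ) :=
  fun x => ∑ α ∈ mIdx m k', (B α).mulVec (mderiv α V x)

/-- `𝒜(u) = 0` on `Ω` in the sense of distributions. -/
def AFree {m n N : ℕ} (k : ℕ) (A : (Fin m → ℕ) → Matrix (Fin N) (Fin n) ℝ)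
    (Ω : Set (Fin m → ℝ)) (u : (Fin m → ℝ) → (Fin n → ℝ)) : Prop :=
  ∀ φ : (Fin m → ℝ) → (Fin N → ℝ), ContDiff ℝ (⊤ : ℕ∞) φ → HasCompactSupport φ → tsupport φ ⊆ Ω →
    ∫ x in Ω, u x ⬝ᵥ (∑ α ∈ mIdx m k, (A α)ᵀ.mulVec (mderiv α φ x)) = 0

/-- `f` coincides with a polynomial of degree at most `d`. -/
def IsPolyDegLE {m : ℕ} (d : ℕ) (f : (Fin m → ℝ) → ℝ) : Prop :=
  ∃ p : MvPolynomial (Fin m) ℝ, p.totalDegree ≤ d ∧ ∀ x, f x = MvPolynomial.eval x p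

/-- `f` is piecewise a polynomial of degree (at most) `d` on `Ω`. -/
def PiecewisePolyOn {m : ℕ} (d : ℕ) (Ω : Set (Fin m → ℝ)) (f : (Fin m → ℝ) → ℝ) : Prop :=
  ∃ U : ℕ → Set (Fin m → ℝ), (∀ j, IsOpen (U j)) ∧ (∀ j, U j ⊆ Ω) ∧
    (Pairwise fun i j => Disjoint (U i) (U j)) ∧ volume (Ω \ ⋃ j, U j) = 0 ∧
    ∀ j, ∃ p : MvPolynomial (Fin m) ℝ, p.totalDegree ≤ d ∧ ∀ x ∈ U j, f x = MvPolynomial.eval x p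

/-- Bound on the `W^{k',∞} ∩ C^{k'-1}(Ω̄)` norm: all derivatives of order `< k'` are bounded
by `C` on `Ω̄` and the order-`k'` derivatives are essentially bounded by `C` on `Ω`. -/
def NormLeWC {m n' : ℕ} (k' : ℕ) (Ω : Set (Fin m → ℝ)) (V : (Fin m → ℝ) → (Fin n' → ℝ))
    (C : ℝ) : Prop :=
  (∀ j < k', ∀ x ∈ closure Ω, ‖iteratedFDerivWithin ℝ j V (closure Ω) x‖ ≤ C) ∧
  (∀ᵐ x ∂(volume.restrict Ω), ‖iteratedFDeriv ℝ k' V x‖ ≤ C)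

/-- `‖V - W‖_{C^{k'-1}(Ω̄)} ≤ ε` (all derivatives of order `< k'`). -/
def CloseCLT {m n' : ℕ} (k' : ℕ) (Ω : Set (Fin m → ℝ)) (V W : (Fin m → ℝ) → (Fin n' → ℝ))
    (ε : ℝ) : Prop :=
  ∀ j < k', ∀ x ∈ closure Ω,
    ‖iteratedFDerivWithin ℝ j V (closure Ω) x - iteratedFDerivWithin ℝ j W (closure Ω) x‖ ≤ ε

/-- `V` and `W` agree, together with all derivatives of order `< k'`, on `∂Ω`. -/
def AgreeOnBoundaryLT {m n' : ℕ} (k' : ℕ) (Ω : Set (Fin m → ℝ))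
    (V W : (Fin m → ℝ) → (Fin n' → ℝ)) : Prop :=
  ∀ j < k', ∀ x ∈ frontier Ω,
    iteratedFDerivWithin ℝ j V (closure Ω) x = iteratedFDerivWithin ℝ j W (closure Ω) x

/-- `E` is essentially open in `Ω`. -/
def EssOpenIn {m : ℕ} (Ω E : Set (Fin m → ℝ)) : Prop :=
  volume (frontier E ∩ Ω) = 0

/-- A `Λ`-convex function. -/
def LamConvex {n : ℕ} (Λ : Set (Fin n → ℝ)) (f : (Fin n → ℝ) → ℝ) : Prop :=
  ∀ a b : Fin n → ℝ, a - b ∈ Λ → ∀ t : ℝ, t ∈ Set.Icc (0:ℝ) 1 →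
    f (t • a + (1 - t) • b) ≤ t * f a + (1 - t) * f b

/-- The `Λ`-convex hull of a (compact) set `K`: barycentres of laminates supported in `K`. -/
def lamHull {n : ℕ} (Λ : Set (Fin n → ℝ)) (K : Set (Fin n → ℝ)) : Set (Fin n → ℝ) :=
  {x | ∃ ν : Measure (Fin n → ℝ), IsProbabilityMeasure ν ∧ ν Kᶜ = 0 ∧
        x = ∫ y, y ∂ν ∧
        ∀ f : (Fin n → ℝ) → ℝ, Continuous f → LamConvex Λ f → f x ≤ ∫ y, f y ∂ν}

/-- The `Λ`-convex hull of an open set. -/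
def lamHullOpen {n : ℕ} (Λ : Set (Fin n → ℝ)) (U : Set (Fin n → ℝ)) : Set (Fin n → ℝ) :=
  ⋃ K ∈ {K : Set (Fin n → ℝ) | IsCompact K ∧ K ⊆ U}, lamHull Λ K


/-- Restricting a homogeneous operator `𝒜` to the span `π` of its wave cone (via an orthonormal
basis `e` of `π`, of dimension `d ≥ 1`) gives an operator `𝒜'` which is balanced; moreover `𝒜`
has constant rank iff `𝒜'` does. -/
theorem balanced_restriction
    {k m n N d : ℕ} (hd : 1 ≤ d)
    (A : (Fin m → ℕ) → Matrix (Fin N) (Fin n) ℝ)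
    (e : Fin d → (Fin n → ℝ))
    (he : ∀ i j : Fin d, e i ⬝ᵥ e j = if i = j then (1 : ℝ) else 0)
    (hspan : Submodule.span ℝ (Set.range e) = Submodule.span ℝ (waveCone k A))
    (A' : (Fin m → ℕ) → Matrix (Fin N) (Fin d) ℝ)
    (hA' : ∀ (ξ : Fin m → ℝ) (η : Fin d → ℝ),
      (opSymb k A' ξ).mulVec η = (opSymb k A ξ).mulVec (∑ i, η i • e i)) :
    IsBalanced k A' ∧ (ConstRank k A ↔ ConstRank k A') := by
  classical
  set T : (Fin d → ℝ) →ₗ[ℝ] (Fin n → ℝ) := Fintype.linearCombination ℝ e with hTdef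
  have hT : ∀ η : Fin d → ℝ, T η = ∑ i, η i • e i := fun η => rfl
  have hdot : ∀ (η : Fin d → ℝ) (j : Fin d), e j ⬝ᵥ T η = η j := by
    intro η j
    rw [hT]
    have h1 : e j ⬝ᵥ (∑ i, η i • e i) = ∑ i, η i * (e j ⬝ᵥ e i) := by
      simp only [dotProduct, Finset.sum_apply, Pi.smul_apply, smul_eq_mul,
        Finset.mul_sum, Finset.sum_mul]
      rw [Finset.sum_comm]
      exact Finset.sum_congr rfl fun i _ => Finset.sum_congr rfl fun l _ => by ring
    rw [h1]
    simp [he]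
  have hTinj : Function.Injective T := by
    intro a b hab
    funext j
    have := hdot (a - b) j
    rw [map_sub] at this
    simp [hab] at this
    linarith [this]
  have hrange : LinearMap.range T = Submodule.span ℝ (Set.range e) :=
    Fintype.range_linearCombination _ _
  have hrange' : LinearMap.range T = Submodule.span ℝ (waveCone k A) := hrange.trans hspan
  have hsub : waveCone k A ⊆ (LinearMap.range T : Set (Fin n → ℝ)) := by
    rw [hrange']; exact Submodule.subset_span
  have hwc : waveCone k A' = T ⁻¹' (waveCone k A) := by
    ext η
    constructor
    · rintro ⟨ξ, hξ, h0⟩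
      exact ⟨ξ, hξ, by rw [hT]; rw [hA'] at h0; exact h0⟩
    · rintro ⟨ξ, hξ, h0⟩
      exact ⟨ξ, hξ, by rw [hA', ← hT]; exact h0⟩
  constructor
  · -- balanced
    apply Submodule.map_injective_of_injective hTinj
    rw [Submodule.map_span, hwc, Set.image_preimage_eq_of_subset, Submodule.map_top, hrange']
    intro x hx
    obtain ⟨y, hy⟩ := hsub hx
    exact ⟨y, hy⟩
  · -- constant rank
    have hker : ∀ ξ : Fin m → ℝ,
        LinearMap.ker (opSymb k A' ξ).mulVecLin
          = Submodule.comap T (LinearMap.ker (opSymb k A ξ).mulVecLin) := by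
      intro ξ
      ext η
      simp only [LinearMap.mem_ker, Submodule.mem_comap, Matrix.mulVecLin_apply, hA', hT]
    have hrk : ∀ ξ : Fin m → ℝ, ξ ≠ 0 →
        (opSymb k A ξ).rank + d = (opSymb k A' ξ).rank + n := by
      intro ξ hξ
      set K := LinearMap.ker (opSymb k A ξ).mulVecLin with hK
      have hKle : K ≤ LinearMap.range T := by
        intro x hx
        exact hsub ⟨ξ, hξ, hx⟩
      have hmapcomap : Submodule.map T (Submodule.comap T K) = K :=
        Submodule.map_comap_eq_self hKle
      have hfr : Module.finrank ℝ (Submodule.comap T K) = Module.finrank ℝ K := by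
        have h := (Submodule.equivMapOfInjective T hTinj (Submodule.comap T K)).finrank_eq
        rw [hmapcomap] at h
        exact h
      have h1 := LinearMap.finrank_range_add_finrank_ker (opSymb k A ξ).mulVecLin
      have h2 := LinearMap.finrank_range_add_finrank_ker (opSymb k A' ξ).mulVecLin
      rw [Module.finrank_fin_fun] at h1 h2
      rw [hker ξ, hfr] at h2
      have h1' : (opSymb k A ξ).rank + Module.finrank ℝ K = n := h1
      have h2' : (opSymb k A' ξ).rank + Module.finrank ℝ K = d := h2
      omega
    constructor
    · rintro ⟨r, hr⟩
      refine ⟨r + d - n, fun ξ hξ => ?_⟩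
      have := hrk ξ hξ
      rw [hr ξ hξ] at this
      omega
    · rintro ⟨r, hr⟩
      refine ⟨r + n - d, fun ξ hξ => ?_⟩
      have := hrk ξ hξ
      rw [hr ξ hξ] at this
      omega
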